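/- For 0 < a < b, the confluent hypergeometric function satisfies ₁F₁(a;b;z) ~ (Γ(b)/Γ(b−a))·|z|^{−a} as z → −∞; in particular ₁F₁(a;b;z)·|z|^{a} → Γ(b)/Γ(b−a) as z → −∞. -/

import Mathlib

open Real MeasureTheory intervalIntegral Filter

/-- The Kummer confluent hypergeometric function `₁F₁(a;b;z)`,
via its Euler integral representation (valid for `0 < a < b`). -/
noncomputable def kummerM (a b z : ℝ) : ℝ :=
  (Real.Gamma b / (Real.Gamma a * Real.Gamma (b - a))) *
    ∫ v in (0:ℝ)..1, v ^ (a - 1) * (1 - v) ^ (b - a - 1) * Real.exp (z * v)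

lemma myBeta_left (p q : ℝ) (hp : 0 < p) :
    IntervalIntegrable (fun v : ℝ => v ^ (p - 1) * (1 - v) ^ q) volume 0 (1/2) := by
  apply IntervalIntegrable.mul_continuousOn
  · exact intervalIntegral.intervalIntegrable_rpow' (by linarith)
  · apply ContinuousOn.rpow_const
    · exact (continuous_const.sub continuous_id).continuousOn
    · intro x hx
      rw [Set.uIcc_of_le (by norm_num : (0:ℝ) ≤ 1/2)] at hx
      left
      have : x ≤ 1/2 := hx.2
      intro h
      have : (1:ℝ) - x = 0 := by linarith [sub_eq_zero.mpr h.symm]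
      linarith

lemma myBeta (p q : ℝ) (hp : 0 < p) (hq : 0 < q) :
    IntervalIntegrable (fun v : ℝ => v ^ (p - 1) * (1 - v) ^ (q - 1)) volume 0 1 := by
  refine (myBeta_left p (q-1) hp).trans ?_
  rw [IntervalIntegrable.iff_comp_neg]
  convert ((myBeta_left q (p-1) hq).comp_add_right 1).symm using 1
  · ext x
    rw [mul_comm]
    congr 2 <;> ring
  · norm_num
  · norm_num

lemma myBetaExp (p q z : ℝ) (hp : 0 < p) (hq : 0 < q) :
    IntervalIntegrable
      (fun v : ℝ => v ^ (p - 1) * (1 - v) ^ (q - 1) * Real.exp (z * v)) volume 0 1 :=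
  (myBeta p q hp hq).mul_continuousOn
    ((Real.continuous_exp.comp (continuous_const.mul continuous_id)).continuousOn)

lemma T1_limit (a c : ℝ) (ha : 0 < a) (hc : -1 < c) :
    Tendsto (fun s : ℝ => s ^ a *
        ∫ v in (0:ℝ)..(1/2), v ^ (a - 1) * (1 - v) ^ c * Real.exp (-(s * v)))
      atTop (nhds (Real.Gamma a)) := by
  set M : ℝ := max 1 ((2:ℝ) ^ (-c)) with hM
  have hM1 : (1:ℝ) ≤ M := le_max_left _ _
  set G : ℝ → ℝ → ℝ := fun s t => (Set.Ioc (0:ℝ) (s/2)).indicator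
    (fun t => t ^ (a - 1) * (1 - t/s) ^ c * Real.exp (-t)) t with hG
  have hDC : Tendsto (fun s : ℝ => ∫ t in Set.Ioi (0:ℝ), G s t) atTop
      (nhds (∫ t in Set.Ioi (0:ℝ), t ^ (a - 1) * Real.exp (-t))) := by
    apply MeasureTheory.tendsto_integral_filter_of_dominated_convergence
      (fun t => M * (Real.exp (-t) * t ^ (a - 1)))
    · filter_upwards with s
      apply Measurable.aestronglyMeasurable
      apply Measurable.indicator _ measurableSet_Ioc
      have m1 : Measurable fun t : ℝ => t ^ (a-1) := by measurability
      have m2 : Measurable fun t : ℝ => (1 - t/s) ^ c := by measurability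
      have m3 : Measurable fun t : ℝ => Real.exp (-t) :=
        (Real.continuous_exp.comp continuous_neg).measurable
      exact (m1.mul m2).mul m3
    · filter_upwards [eventually_gt_atTop (0:ℝ)] with s hs
      filter_upwards [ae_restrict_mem measurableSet_Ioi] with t ht
      by_cases hmem : t ∈ Set.Ioc (0:ℝ) (s/2)
      · rw [hG]
        simp only [Set.indicator_of_mem hmem]
        have ht0 : 0 < t := hmem.1
        have hts : t / s ≤ 1/2 := by
          rw [div_le_div_iff₀ hs (by norm_num)]; linarith [hmem.2]
        have hts0 : 0 < t / s := div_pos ht0 hs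
        have hb1 : (1/2:ℝ) ≤ 1 - t/s := by linarith
        have hb2 : 1 - t/s ≤ 1 := by linarith
        have hrle : (1 - t/s) ^ c ≤ M := by
          rcases le_or_gt 0 c with h | h
          · exact le_trans (Real.rpow_le_one (by linarith) hb2 h) hM1
          · refine le_trans ?_ (le_max_right _ _)
            have := Real.rpow_le_rpow_of_nonpos (by norm_num : (0:ℝ) < 1/2) hb1 h.le
            calc (1 - t/s) ^ c ≤ (1/2:ℝ) ^ c := this
              _ = (2:ℝ) ^ (-c) := by
                  rw [one_div, Real.inv_rpow (by norm_num), ← Real.rpow_neg (by norm_num)]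
        rw [Real.norm_eq_abs, abs_of_nonneg (by positivity)]
        calc t ^ (a - 1) * (1 - t/s) ^ c * Real.exp (-t)
            ≤ t ^ (a - 1) * M * Real.exp (-t) := by
              have := Real.rpow_nonneg ht0.le (a-1)
              gcongr
          _ = M * (Real.exp (-t) * t ^ (a - 1)) := by ring
      · rw [hG]
        simp only [Set.indicator_of_notMem hmem, norm_zero]
        have ht0 : (0:ℝ) < t := ht
        positivity
    · exact (Real.GammaIntegral_convergent ha).const_mul M
    · filter_upwards [ae_restrict_mem measurableSet_Ioi] with t ht
      have ht0 : (0:ℝ) < t := ht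
      apply Tendsto.congr' (f₁ := fun s : ℝ => t ^ (a - 1) * (1 - t/s) ^ c * Real.exp (-t))
      · filter_upwards [eventually_ge_atTop (2*t)] with s hs
        have : t ∈ Set.Ioc (0:ℝ) (s/2) := ⟨ht0, by linarith⟩
        rw [hG]; simp only [Set.indicator_of_mem this]
      · have hdiv : Tendsto (fun s : ℝ => t / s) atTop (nhds 0) :=
          Tendsto.div_atTop tendsto_const_nhds tendsto_id
        have hsub : Tendsto (fun s : ℝ => 1 - t / s) atTop (nhds 1) := by
          simpa using tendsto_const_nhds.sub hdiv
        have hrpow : Tendsto (fun s : ℝ => (1 - t / s) ^ c) atTop (nhds 1) := by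
          have := ((Real.continuousAt_rpow_const 1 c (Or.inl one_ne_zero)).tendsto).comp hsub
          simpa [Function.comp_def] using this
        have h1 : Tendsto (fun s : ℝ => t ^ (a-1) * (1 - t / s) ^ c) atTop
            (nhds (t ^ (a-1) * 1)) :=
          (tendsto_const_nhds (x := t ^ (a-1))).mul hrpow
        have h2 : Tendsto (fun s : ℝ => t ^ (a-1) * (1 - t / s) ^ c * Real.exp (-t)) atTop
            (nhds (t ^ (a-1) * 1 * Real.exp (-t))) :=
          h1.mul (tendsto_const_nhds (x := Real.exp (-t)))
        simpa using h2
  have heq : ∀ᶠ s : ℝ in atTop, (∫ t in Set.Ioi (0:ℝ), G s t) =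
      s ^ a * ∫ v in (0:ℝ)..(1/2), v ^ (a - 1) * (1 - v) ^ c * Real.exp (-(s * v)) := by
    filter_upwards [eventually_gt_atTop (0:ℝ)] with s hs
    have hsa : (0:ℝ) < s ^ a := Real.rpow_pos_of_pos hs a
    have step1 : (∫ v in (0:ℝ)..(1/2), v ^ (a - 1) * (1 - v) ^ c * Real.exp (-(s * v)))
        = ∫ v in (0:ℝ)..(1/2),
            (fun t => (t/s) ^ (a - 1) * (1 - t/s) ^ c * Real.exp (-t)) (s * v) := by
      apply intervalIntegral.integral_congr
      intro v _
      simp only [mul_div_cancel_left₀ _ hs.ne']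
    have step2 : (∫ v in (0:ℝ)..(1/2),
            (fun t => (t/s) ^ (a - 1) * (1 - t/s) ^ c * Real.exp (-t)) (s * v))
        = s⁻¹ • ∫ t in (0:ℝ)..(s/2), (t/s) ^ (a - 1) * (1 - t/s) ^ c * Real.exp (-t) := by
      rw [intervalIntegral.integral_comp_mul_left
        (fun t => (t/s) ^ (a - 1) * (1 - t/s) ^ c * Real.exp (-t)) hs.ne']
      rw [mul_zero, show s * (1/2) = s/2 by ring]
    have step3 : (∫ t in (0:ℝ)..(s/2), (t/s) ^ (a - 1) * (1 - t/s) ^ c * Real.exp (-t))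
        = (s ^ (a-1))⁻¹ * ∫ t in Set.Ioi (0:ℝ), G s t := by
      rw [intervalIntegral.integral_of_le (by positivity : (0:ℝ) ≤ s/2)]
      have : (∫ t in Set.Ioi (0:ℝ), G s t)
          = ∫ t in Set.Ioc (0:ℝ) (s/2), t ^ (a - 1) * (1 - t/s) ^ c * Real.exp (-t) := by
        rw [hG, MeasureTheory.integral_indicator measurableSet_Ioc,
          Measure.restrict_restrict measurableSet_Ioc,
          Set.inter_eq_left.mpr (Set.Ioc_subset_Ioi_self)]
      rw [this, ← MeasureTheory.integral_const_mul]
      apply MeasureTheory.setIntegral_congr_fun measurableSet_Ioc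
      intro t htm
      have ht0 : 0 < t := htm.1
      simp only
      rw [Real.div_rpow ht0.le hs.le, div_eq_mul_inv, mul_comm (t ^ (a-1))]
      ring
    rw [step1, step2, step3, smul_eq_mul]
    have hcoef : s ^ a * (s⁻¹ * (s ^ (a-1))⁻¹) = 1 := by
      have h1 : s * s ^ (a-1) = s ^ a := by
        nth_rewrite 1 [← Real.rpow_one s]
        rw [← Real.rpow_add hs]
        ring_nf
      rw [← mul_inv, h1, mul_inv_cancel₀ hsa.ne']
    set X := ∫ t in Set.Ioi (0:ℝ), G s t with hX
    have : s ^ a * (s⁻¹ * ((s ^ (a-1))⁻¹ * X)) = (s ^ a * (s⁻¹ * (s ^ (a-1))⁻¹)) * X := by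
      ring
    rw [this, hcoef, one_mul]
  have hGam : (∫ t in Set.Ioi (0:ℝ), t ^ (a - 1) * Real.exp (-t)) = Real.Gamma a := by
    rw [Real.Gamma_eq_integral ha]
    congr 1
    ext t
    ring
  rw [hGam] at hDC
  exact hDC.congr' heq

lemma T2_limit (a c : ℝ)
    (hIntR : ∀ s : ℝ, IntervalIntegrable
      (fun v : ℝ => v ^ (a - 1) * (1 - v) ^ c * Real.exp (-(s * v))) volume (1/2) 1)
    (hIntR0 : IntervalIntegrable
      (fun v : ℝ => v ^ (a - 1) * (1 - v) ^ c) volume (1/2) 1) :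
    Tendsto (fun s : ℝ => s ^ a *
        ∫ v in (1/2:ℝ)..1, v ^ (a - 1) * (1 - v) ^ c * Real.exp (-(s * v)))
      atTop (nhds 0) := by
  set K : ℝ := ∫ v in (1/2:ℝ)..1, v ^ (a - 1) * (1 - v) ^ c with hK
  have hbound : Tendsto (fun s : ℝ => s ^ a * Real.exp (-(1/2 * s)) * K) atTop (nhds 0) := by
    simpa using (tendsto_rpow_mul_exp_neg_mul_atTop_nhds_zero a (1/2) one_half_pos).mul_const K
  apply squeeze_zero_norm' ?_ hbound
  filter_upwards [eventually_ge_atTop (0:ℝ)] with s hs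
  have h1 : |∫ v in (1/2:ℝ)..1, v ^ (a - 1) * (1 - v) ^ c * Real.exp (-(s * v))|
      ≤ ∫ v in (1/2:ℝ)..1, |v ^ (a - 1) * (1 - v) ^ c * Real.exp (-(s * v))| :=
    intervalIntegral.abs_integral_le_integral_abs (by norm_num)
  have h2 : (∫ v in (1/2:ℝ)..1, |v ^ (a - 1) * (1 - v) ^ c * Real.exp (-(s * v))|)
      ≤ ∫ v in (1/2:ℝ)..1, Real.exp (-(1/2 * s)) * (v ^ (a - 1) * (1 - v) ^ c) := by
    apply intervalIntegral.integral_mono_on (by norm_num) (hIntR s).abs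
      (hIntR0.const_mul _)
    intro v hv
    have hv1 : (1/2:ℝ) ≤ v := hv.1
    have hv2 : v ≤ 1 := hv.2
    have hnn : 0 ≤ v ^ (a - 1) * (1 - v) ^ c := by
      have : (0:ℝ) ≤ v := by linarith
      have : (0:ℝ) ≤ 1 - v := by linarith
      positivity
    rw [abs_of_nonneg (by positivity)]
    have hexp : Real.exp (-(s * v)) ≤ Real.exp (-(1/2 * s)) := by
      apply Real.exp_le_exp.mpr
      nlinarith
    calc v ^ (a - 1) * (1 - v) ^ c * Real.exp (-(s * v))
        ≤ v ^ (a - 1) * (1 - v) ^ c * Real.exp (-(1/2 * s)) := by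
          exact mul_le_mul_of_nonneg_left hexp hnn
      _ = Real.exp (-(1/2 * s)) * (v ^ (a - 1) * (1 - v) ^ c) := by ring
  rw [intervalIntegral.integral_const_mul] at h2
  rw [Real.norm_eq_abs, abs_mul, abs_of_nonneg (Real.rpow_nonneg hs a)]
  calc s ^ a * |∫ v in (1/2:ℝ)..1, v ^ (a - 1) * (1 - v) ^ c * Real.exp (-(s * v))|
      ≤ s ^ a * (Real.exp (-(1/2 * s)) * K) := by
        exact mul_le_mul_of_nonneg_left (h1.trans h2) (Real.rpow_nonneg hs a)
    _ = s ^ a * Real.exp (-(1/2 * s)) * K := by ring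

lemma key_limit (a c : ℝ) (ha : 0 < a) (hc : -1 < c) :
    Tendsto (fun s : ℝ => s ^ a *
        ∫ v in (0:ℝ)..1, v ^ (a - 1) * (1 - v) ^ c * Real.exp (-(s * v)))
      atTop (nhds (Real.Gamma a)) := by
  have hq : (0:ℝ) < c + 1 := by linarith
  have hInt : ∀ s : ℝ, IntervalIntegrable
      (fun v : ℝ => v ^ (a - 1) * (1 - v) ^ c * Real.exp (-(s * v))) volume 0 1 := by
    intro s
    have := myBetaExp a (c+1) (-s) ha hq
    simpa [neg_mul, add_sub_cancel_right] using this
  have hIntL : ∀ s : ℝ, IntervalIntegrable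
      (fun v : ℝ => v ^ (a - 1) * (1 - v) ^ c * Real.exp (-(s * v))) volume 0 (1/2) :=
    fun s => (hInt s).mono_set (by rw [Set.uIcc_of_le, Set.uIcc_of_le] <;> first
      | exact Set.Icc_subset_Icc le_rfl (by norm_num) | norm_num)
  have hIntR : ∀ s : ℝ, IntervalIntegrable
      (fun v : ℝ => v ^ (a - 1) * (1 - v) ^ c * Real.exp (-(s * v))) volume (1/2) 1 :=
    fun s => (hInt s).mono_set (by rw [Set.uIcc_of_le, Set.uIcc_of_le] <;> first
      | exact Set.Icc_subset_Icc (by norm_num) le_rfl | norm_num)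
  have hIntR0 : IntervalIntegrable
      (fun v : ℝ => v ^ (a - 1) * (1 - v) ^ c) volume (1/2) 1 := by
    have h0 : IntervalIntegrable
        (fun v : ℝ => v ^ (a - 1) * (1 - v) ^ c) volume 0 1 := by
      have := myBeta a (c+1) ha hq
      simpa [add_sub_cancel_right] using this
    exact h0.mono_set (by rw [Set.uIcc_of_le, Set.uIcc_of_le] <;> first
      | exact Set.Icc_subset_Icc (by norm_num) le_rfl | norm_num)
  have hT1 := T1_limit a c ha hc
  have hT2 := T2_limit a c hIntR hIntR0
  have hsum := hT1.add hT2
  rw [add_zero] at hsum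
  apply hsum.congr
  intro s
  rw [← mul_add, intervalIntegral.integral_add_adjacent_intervals (hIntL s) (hIntR s)]

theorem kummerM_asymptotics_atBot (a b : ℝ) (ha : 0 < a) (hab : a < b) :
    Filter.Tendsto (fun z : ℝ => kummerM a b z * |z| ^ a) Filter.atBot
      (nhds (Real.Gamma b / Real.Gamma (b - a))) := by
  set C : ℝ := Real.Gamma b / (Real.Gamma a * Real.Gamma (b - a)) with hC
  have hkey := key_limit a (b - a - 1) ha (by linarith)
  have h2 : Tendsto (fun z : ℝ => (-z) ^ a *
      ∫ v in (0:ℝ)..1, v ^ (a - 1) * (1 - v) ^ (b - a - 1) * Real.exp (-((-z) * v)))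
      atBot (nhds (Real.Gamma a)) := hkey.comp tendsto_neg_atBot_atTop
  have h3 := h2.const_mul C
  have hΓa : Real.Gamma a ≠ 0 := (Real.Gamma_pos_of_pos ha).ne'
  have hΓba : Real.Gamma (b - a) ≠ 0 := (Real.Gamma_pos_of_pos (by linarith)).ne'
  have hval : C * Real.Gamma a = Real.Gamma b / Real.Gamma (b - a) := by
    rw [hC]
    field_simp
  rw [hval] at h3
  apply h3.congr'
  filter_upwards [eventually_lt_atBot (0:ℝ)] with z hz
  have habs : |z| = -z := abs_of_neg hz
  simp only [kummerM, Function.comp]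
  rw [habs]
  have : (fun v : ℝ => v ^ (a - 1) * (1 - v) ^ (b - a - 1) * Real.exp (-((-z) * v)))
      = fun v : ℝ => v ^ (a - 1) * (1 - v) ^ (b - a - 1) * Real.exp (z * v) := by
    funext v
    rw [neg_mul, neg_neg]
  rw [this]
  ring
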